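/- arXiv:2406.08985 — 2 statements merged into one kernel-verified Lean document; each statement's English description precedes it below -/
import Mathlib

section
/- For every finite simple graph G and every edge {v, w} ∈ E(G), it holds that tw(Subdiv(G, v, w)) = tw(G) and pw(G) ≤ pw(Subdiv(G, v, w)) ≤ pw(G) + 1, where Subdiv(G, v, w) is the edge subdivision of {v, w} in G. -/
open SimpleGraph

/-- `(T, X)` is a tree-decomposition of the graph `G`. -/
def IsTreeDecomp {V ι : Type} (G : SimpleGraph V) (T : SimpleGraph ι)
    (X : ι → Finset V) : Prop :=
  T.IsTree ∧
  (∀ v : V, ∃ u : ι, v ∈ X u) ∧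
  (∀ v w : V, G.Adj v w → ∃ u : ι, v ∈ X u ∧ w ∈ X u) ∧
  (∀ v : V, (T.induce {u : ι | v ∈ X u}).Connected)

/-- The tree-width of `G`: the minimum over all tree-decompositions of
(maximum bag size − 1). -/
noncomputable def treewidth {V : Type} (G : SimpleGraph V) : ℕ :=
  sInf { k | ∃ (ι : Type) (T : SimpleGraph ι) (X : ι → Finset V),
    IsTreeDecomp G T X ∧ sSup (Set.range fun u => (X u).card) - 1 = k }

/-- `X` is a path-decomposition of the graph `G`. -/
def IsPathDecomp {V : Type} {r : ℕ} (G : SimpleGraph V) (X : Fin r → Finset V) : Prop :=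
  (∀ v : V, ∃ i, v ∈ X i) ∧
  (∀ v w : V, G.Adj v w → ∃ i, v ∈ X i ∧ w ∈ X i) ∧
  (∀ i j l : Fin r, i < j → j < l → ∀ x, x ∈ X i → x ∈ X l → x ∈ X j)

/-- The path-width of `G`: the minimum over all path-decompositions of
(maximum bag size − 1). -/
noncomputable def pathwidth {V : Type} (G : SimpleGraph V) : ℕ :=
  sInf { k | ∃ (r : ℕ) (X : Fin r → Finset V),
    IsPathDecomp G X ∧ sSup (Set.range fun i => (X i).card) - 1 = k }

/-- `subdiv G v w` is the edge subdivision `Subdiv(G, v, w)`: the edge `{v, w}` is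
removed and a new vertex (modelled as `none`) is added, adjacent exactly to `v` and `w`. -/
def subdiv {V : Type} (G : SimpleGraph V) (v w : V) : SimpleGraph (Option V) where
  Adj x y :=
    match x, y with
    | some a, some b => G.Adj a b ∧ ¬(a = v ∧ b = w) ∧ ¬(a = w ∧ b = v)
    | some a, none => a = v ∨ a = w
    | none, some b => b = v ∨ b = w
    | none, none => False
  symm := by
    constructor
    rintro (_ | a) (_ | b) h <;> simp_all [SimpleGraph.adj_comm] <;> tauto
  loopless := by
    constructor
    rintro (_ | a) h <;> simp_all

namespace TWAux

variable {α β : Type}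

/-- Transfer a walk with support in `S` along a vertex map into reachability. -/
lemma reach_transfer {G : SimpleGraph α} {H : SimpleGraph β} {S : Set α} (f : α → β)
    (hadj : ∀ a b, a ∈ S → b ∈ S → G.Adj a b → H.Adj (f a) (f b)) :
    ∀ {x y : α} (w : G.Walk x y), (∀ z ∈ w.support, z ∈ S) → H.Reachable (f x) (f y) := by
  intro x y w
  induction w with
  | nil => intro _; rfl
  | cons h p ih =>
    intro hs
    refine ((hadj _ _ (hs _ ?_) (hs _ ?_) h).reachable).trans (ih ?_)
    · exact SimpleGraph.Walk.start_mem_support _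
    · simp [SimpleGraph.Walk.support_cons]
    · intro z hz; exact hs z (by simp [SimpleGraph.Walk.support_cons, hz])

/-- From reachability in an induced subgraph, extract a walk in the base graph whose
support stays in `S`. -/
lemma exists_walk_of_induce_reachable {G : SimpleGraph α} {S : Set α} {a b : ↥S}
    (h : (G.induce S).Reachable a b) :
    ∃ w : G.Walk a.1 b.1, ∀ z ∈ w.support, z ∈ S := by
  obtain ⟨w⟩ := h
  induction w with
  | nil => exact ⟨SimpleGraph.Walk.nil, by rintro z hz; simp at hz; subst hz; exact Subtype.prop _⟩
  | @cons u v' x h p ih =>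
    obtain ⟨w', hw'⟩ := ih
    refine ⟨SimpleGraph.Walk.cons h w', ?_⟩
    intro z hz
    change z ∈ (u.1 :: w'.support) at hz
    rcases List.mem_cons.mp hz with hz | hz
    · subst hz; exact u.2
    · exact hw' z hz

/-- Transfer a walk with support in `S` into reachability inside an induced subgraph. -/
lemma induce_reach_of_walk {G : SimpleGraph α} {H : SimpleGraph β} {S : Set α} {S' : Set β}
    (f : α → β) (hf : ∀ a ∈ S, f a ∈ S')
    (hadj : ∀ a b, a ∈ S → b ∈ S → G.Adj a b → H.Adj (f a) (f b)) :
    ∀ {x y : α} (w : G.Walk x y) (hw : ∀ z ∈ w.support, z ∈ S)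
      (hx : x ∈ S) (hy : y ∈ S),
      (H.induce S').Reachable ⟨f x, hf x hx⟩ ⟨f y, hf y hy⟩ := by
  intro x y w
  induction w with
  | nil => intro _ _ _; rfl
  | @cons u m y' h p ih =>
    intro hw hx hy
    have hm : m ∈ S := hw m (by simp [SimpleGraph.Walk.support_cons])
    have : (H.induce S').Adj ⟨f u, hf u hx⟩ ⟨f m, hf m hm⟩ := by
      exact hadj _ _ hx hm h
    exact this.reachable.trans (ih (fun z hz => hw z (by simp [SimpleGraph.Walk.support_cons, hz])) hm hy)

lemma induce_connected_transfer {G : SimpleGraph α} {H : SimpleGraph β} {S : Set α} {S' : Set β}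
    (f : α → β) (hS : (G.induce S).Connected) (hf : ∀ a ∈ S, f a ∈ S')
    (hadj : ∀ a b, a ∈ S → b ∈ S → G.Adj a b → H.Adj (f a) (f b))
    {x y : α} (hx : x ∈ S) (hy : y ∈ S) :
    (H.induce S').Reachable ⟨f x, hf x hx⟩ ⟨f y, hf y hy⟩ := by
  obtain ⟨w, hw⟩ := exists_walk_of_induce_reachable (hS.preconnected ⟨x, hx⟩ ⟨y, hy⟩)
  exact induce_reach_of_walk f hf hadj w hw hx hy

/-- Lift a cycle along an injective, adjacency-reflecting map: if `H` has a cycle whose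
support lies in the range of `f`, then `G` is not acyclic. -/
lemma not_isAcyclic_of_cycle_in_range {G : SimpleGraph α} {H : SimpleGraph β}
    (f : G →g H) (hinj : Function.Injective f)
    (hrefl : ∀ a b : α, H.Adj (f a) (f b) → G.Adj a b)
    {b : β} (c : H.Walk b b) (hc : c.IsCycle)
    (hsupp : ∀ z ∈ c.support, z ∈ Set.range f) : ¬ G.IsAcyclic := by
  classical
  -- auxiliary lifting of walks
  have aux : ∀ {b₁ b₂ : β} (w : H.Walk b₁ b₂), (∀ z ∈ w.support, z ∈ Set.range f) →
      ∀ (a₁ : α) (h₁ : f a₁ = b₁),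
      ∃ (a₂ : α) (h₂ : f a₂ = b₂) (w' : G.Walk a₁ a₂),
        w'.map f = w.copy h₁.symm h₂.symm := by
    intro b₁ b₂ w
    induction w with
    | nil =>
      intro _ a₁ h₁
      exact ⟨a₁, h₁, SimpleGraph.Walk.nil, by subst h₁; simp⟩
    | @cons u m y' h p ih =>
      intro hs a₁ h₁
      obtain ⟨a', ha'⟩ := hs m (by simp [SimpleGraph.Walk.support_cons])
      have hGadj : G.Adj a₁ a' := hrefl _ _ (by rw [h₁, ha']; exact h)
      obtain ⟨a₂, h₂, w', hw'⟩ := ih (fun z hz => hs z (by simp [SimpleGraph.Walk.support_cons, hz])) a' ha'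
      refine ⟨a₂, h₂, SimpleGraph.Walk.cons hGadj w', ?_⟩
      subst h₁; subst ha'; subst h₂
      simp only [SimpleGraph.Walk.copy_rfl_rfl] at hw' ⊢
      rw [SimpleGraph.Walk.map_cons, hw']
  obtain ⟨a, ha⟩ := hsupp b (SimpleGraph.Walk.start_mem_support c)
  obtain ⟨a₂, h₂, w', hw'⟩ := aux c hsupp a ha
  have : a₂ = a := hinj (by rw [h₂, ha])
  subst this
  subst ha
  simp only [SimpleGraph.Walk.copy_rfl_rfl] at hw'
  intro hac
  exact hac w' ((SimpleGraph.Walk.map_isCycle_iff_of_injective hinj).mp (hw' ▸ hc))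

lemma isAcyclic_of_le {G H : SimpleGraph α} (hle : G ≤ H) (hH : H.IsAcyclic) :
    G.IsAcyclic := by
  intro v c hc
  exact hH (c.map (SimpleGraph.Hom.ofLE hle))
    ((SimpleGraph.Walk.map_isCycle_iff_of_injective (f := SimpleGraph.Hom.ofLE hle)
      (fun a b hab => hab)).mpr hc)

lemma isAcyclic_induce {G : SimpleGraph α} (hG : G.IsAcyclic) (S : Set α) :
    (G.induce S).IsAcyclic := by
  intro v c hc
  let f : G.induce S →g G := ⟨Subtype.val, fun h => h⟩
  exact hG (c.map f)
    ((SimpleGraph.Walk.map_isCycle_iff_of_injective (f := f)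
      (fun a b hab => Subtype.val_injective hab)).mpr hc)

/-- Convexity: in a tree, any path between two vertices of a connected induced set
stays inside the set. -/
lemma path_support_subset {T : SimpleGraph α} (hT : T.IsTree) {S : Set α}
    (hS : (T.induce S).Connected) {a b : α} (ha : a ∈ S) (hb : b ∈ S)
    (p : T.Walk a b) (hp : p.IsPath) : ∀ z ∈ p.support, z ∈ S := by
  classical
  obtain ⟨w, hw⟩ := exists_walk_of_induce_reachable (hS.preconnected ⟨a, ha⟩ ⟨b, hb⟩)
  have : (⟨p, hp⟩ : T.Path a b) = ⟨w.bypass, w.bypass_isPath⟩ :=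
    (isAcyclic_iff_path_unique.mp hT.IsAcyclic) _ _
  intro z hz
  have : p = w.bypass := congrArg Subtype.val this
  rw [this] at hz
  exact hw z (w.support_bypass_subset hz)

/-- Helly property: the intersection of two connected induced subsets of a tree
is connected, provided it is nonempty. -/
lemma helly {T : SimpleGraph α} (hT : T.IsTree) {S₁ S₂ : Set α}
    (h1 : (T.induce S₁).Connected) (h2 : (T.induce S₂).Connected)
    (hne : (S₁ ∩ S₂).Nonempty) : (T.induce (S₁ ∩ S₂)).Connected := by
  classical
  rw [SimpleGraph.connected_iff]
  refine ⟨?_, ?_⟩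
  · rintro ⟨x, hx⟩ ⟨y, hy⟩
    obtain ⟨w⟩ := hT.isConnected.preconnected x y
    have hp := w.bypass_isPath
    have hs1 := path_support_subset hT h1 hx.1 hy.1 w.bypass hp
    have hs2 := path_support_subset hT h2 hx.2 hy.2 w.bypass hp
    have := induce_reach_of_walk (G := T) (H := T) (S := S₁ ∩ S₂) (S' := S₁ ∩ S₂) id
      (fun a haa => haa) (fun a b _ _ hab => hab) w.bypass
      (fun z hz => ⟨hs1 z hz, hs2 z hz⟩) hx hy
    exact this
  · exact ⟨⟨hne.choose, hne.choose_spec⟩⟩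


variable {ι₁ ι₂ : Type}

/-- Glue an acyclic graph `F` onto a tree `T₂`: each connected component of `F` has a
distinguished representative (given by `d`), which is attached to the vertex `g` of `T₂`. -/
def glued (F : SimpleGraph ι₁) (T₂ : SimpleGraph ι₂) (d : ι₁ → ι₁) (g : ι₁ → ι₂) :
    SimpleGraph (ι₁ ⊕ ι₂) where
  Adj p q := match p, q with
    | .inl a, .inl b => F.Adj a b
    | .inl a, .inr b => d a = a ∧ g a = b
    | .inr b, .inl a => d a = a ∧ g a = b
    | .inr a, .inr b => T₂.Adj a b
  symm := by constructor; rintro (a | a) (b | b) hh <;> simp only at hh ⊢ <;> first | exact hh.symm | exact hh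
  loopless := by constructor; rintro (a | a) hh <;> simp only at hh <;> exact (SimpleGraph.irrefl _) hh

variable {F : SimpleGraph ι₁} {T₂ : SimpleGraph ι₂} {d : ι₁ → ι₁} {g : ι₁ → ι₂}

lemma glued_adj_inl_inl {a b : ι₁} : (glued F T₂ d g).Adj (.inl a) (.inl b) ↔ F.Adj a b := Iff.rfl
lemma glued_adj_inr_inr {a b : ι₂} : (glued F T₂ d g).Adj (.inr a) (.inr b) ↔ T₂.Adj a b := Iff.rfl
lemma glued_adj_inl_inr {a : ι₁} {b : ι₂} :
    (glued F T₂ d g).Adj (.inl a) (.inr b) ↔ d a = a ∧ g a = b := Iff.rfl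

lemma reachable_d_eq (hd2 : ∀ x y, F.Adj x y → d x = d y) {x y : ι₁}
    (h : F.Reachable x y) : d x = d y := by
  obtain ⟨w⟩ := h
  induction w with
  | nil => rfl
  | cons h p ih => rw [hd2 _ _ h]; exact ih

/-- the crossing edge of the component of `x` appears on every walk from `inl x` to the
`inr` side. -/
lemma glued_cross_mem_edges (hd2 : ∀ x y, F.Adj x y → d x = d y) :
    ∀ {p q : ι₁ ⊕ ι₂} (w : (glued F T₂ d g).Walk p q) (x : ι₁) (y : ι₂),
      p = .inl x → q = .inr y →
      s(Sum.inl (d x), Sum.inr (g (d x))) ∈ w.edges := by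
  intro p q w
  induction w with
  | nil => rintro x y rfl h; cases h
  | @cons u m q' h w' ih =>
    rintro x y rfl rfl
    rcases m with m | m
    · have hdx : d m = d x := (hd2 _ _ h).symm
      have := ih m y rfl rfl
      rw [hdx] at this
      simp [SimpleGraph.Walk.edges_cons, this]
    · obtain ⟨h1, h2⟩ := (glued_adj_inl_inr).mp h
      have : s(Sum.inl (d x), Sum.inr (g (d x))) = s(Sum.inl x, Sum.inr m) := by
        rw [h1, h2]
      simp [SimpleGraph.Walk.edges_cons, this]

theorem glued_isTree (hd1 : ∀ x, F.Reachable x (d x)) (hd2 : ∀ x y, F.Adj x y → d x = d y)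
    (hF : F.IsAcyclic) (hT : T₂.IsTree) : (glued F T₂ d g).IsTree := by
  classical
  constructor
  · -- connected
    have hbase : ∀ p : ι₁ ⊕ ι₂, ∃ y : ι₂, (glued F T₂ d g).Reachable p (.inr y) := by
      rintro (x | y)
      · refine ⟨g (d x), ?_⟩
        have h1 : (glued F T₂ d g).Reachable (.inl x) (.inl (d x)) := by
          obtain ⟨w⟩ := hd1 x
          exact reach_transfer (S := Set.univ) Sum.inl
            (fun a b _ _ hab => hab) w (fun z _ => Set.mem_univ z)
        refine h1.trans (SimpleGraph.Adj.reachable ?_)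
        exact glued_adj_inl_inr.mpr ⟨(reachable_d_eq hd2 (hd1 x)).symm, rfl⟩
      · exact ⟨y, .refl _⟩
    rw [SimpleGraph.connected_iff]
    constructor
    · intro p q
      obtain ⟨y₁, h1⟩ := hbase p
      obtain ⟨y₂, h2⟩ := hbase q
      refine h1.trans (Reachable.trans ?_ h2.symm)
      obtain ⟨w⟩ := hT.isConnected.preconnected y₁ y₂
      exact reach_transfer (S := Set.univ) Sum.inr
        (fun a b _ _ hab => hab) w (fun z _ => Set.mem_univ z)
    · exact ⟨.inr (Classical.choice hT.isConnected.nonempty)⟩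
  · -- acyclic
    intro p c hc
    rcases Classical.em (∃ x : ι₁, Sum.inl x ∈ c.support) with hmixL | hmixL
    · rcases Classical.em (∃ y : ι₂, Sum.inr y ∈ c.support) with hmixR | hmixR
      · -- mixed cycle: impossible
        obtain ⟨x, hx⟩ := hmixL
        obtain ⟨y, hy⟩ := hmixR
        have hc' := hc.rotate hx
        set c' := c.rotate _ hx with hc'def
        have hy' : Sum.inr y ∈ c'.support := by
          have htail : Sum.inr y ∈ c.support.tail := by
            cases c with
            | nil => exact absurd rfl hc.ne_nil
            | cons hadj q =>
              rcases List.mem_cons.mp (by simpa [SimpleGraph.Walk.support_cons] using hy) with h' | h'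
              · rw [SimpleGraph.Walk.support_cons]
                simp only [List.tail_cons]
                rw [h']
                exact SimpleGraph.Walk.end_mem_support q
              · rw [SimpleGraph.Walk.support_cons]
                simpa using h'
          have := ((SimpleGraph.Walk.support_rotate c _ hx).perm.mem_iff (a := Sum.inr y)).mpr htail
          rw [hc'def]
          exact List.mem_of_mem_tail this
        have hsplit := c'.take_spec hy'
        have hedges : c'.edges = (c'.takeUntil _ hy').edges ++ (c'.dropUntil _ hy').edges := by
          rw [← SimpleGraph.Walk.edges_append, hsplit]
        have h1 : s(Sum.inl (d x), Sum.inr (g (d x))) ∈ (c'.takeUntil _ hy').edges :=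
          glued_cross_mem_edges hd2 (c'.takeUntil _ hy') x y rfl rfl
        have h2 : s(Sum.inl (d x), Sum.inr (g (d x))) ∈ (c'.dropUntil _ hy').edges := by
          have := glued_cross_mem_edges hd2 (c'.dropUntil _ hy').reverse x y rfl rfl
          rwa [SimpleGraph.Walk.edges_reverse, List.mem_reverse] at this
        have hnodup := hc'.edges_nodup
        rw [hedges] at hnodup
        exact (List.disjoint_of_nodup_append hnodup) h1 h2
      · -- all on the left
        push_neg at hmixR
        have hsupp : ∀ z ∈ c.support, z ∈ Set.range (Sum.inl : ι₁ → ι₁ ⊕ ι₂) := by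
          intro z hz
          rcases z with z | z
          · exact ⟨z, rfl⟩
          · exact absurd hz (hmixR z)
        exact not_isAcyclic_of_cycle_in_range (G := F) ⟨Sum.inl, fun h => h⟩
          (by exact Sum.inl_injective) (fun a b hab => hab) c hc hsupp hF
    · push_neg at hmixL
      have hsupp : ∀ z ∈ c.support, z ∈ Set.range (Sum.inr : ι₂ → ι₁ ⊕ ι₂) := by
        intro z hz
        rcases z with z | z
        · exact absurd hz (hmixL z)
        · exact ⟨z, rfl⟩
      exact not_isAcyclic_of_cycle_in_range (G := T₂) ⟨Sum.inr, fun h => h⟩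
        (by exact Sum.inr_injective) (fun a b hab => hab) c hc hsupp hT.IsAcyclic


variable {V : Type} {G : SimpleGraph V} {v w : V}

lemma subdiv_adj_some_some {a b : V} :
    (subdiv G v w).Adj (some a) (some b) ↔
      G.Adj a b ∧ ¬(a = v ∧ b = w) ∧ ¬(a = w ∧ b = v) := Iff.rfl

lemma subdiv_adj_some_none {a : V} :
    (subdiv G v w).Adj (some a) none ↔ a = v ∨ a = w := Iff.rfl

lemma subdiv_adj_none_some {b : V} :
    (subdiv G v w).Adj none (some b) ↔ b = v ∨ b = w := Iff.rfl

lemma subdiv_adj_none_none : ¬ (subdiv G v w).Adj none none := fun h => h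

lemma mem_image_getD [DecidableEq V] {s : Finset (Option V)} {x : V} :
    x ∈ s.image (fun o => o.getD w) ↔ (some x ∈ s ∨ (x = w ∧ none ∈ s)) := by
  simp only [Finset.mem_image]
  constructor
  · rintro ⟨o, ho, rfl⟩
    cases o with
    | none => exact Or.inr ⟨rfl, ho⟩
    | some a => exact Or.inl ho
  · rintro (hh | ⟨rfl, hh⟩)
    · exact ⟨some x, hh, rfl⟩
    · exact ⟨none, hh, rfl⟩

lemma mem_image_some [DecidableEq V] {s : Finset V} {x : V} :
    some x ∈ s.image some ↔ x ∈ s := by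
  simp [Finset.mem_image]

lemma none_not_mem_image_some [DecidableEq V] {s : Finset V} :
    (none : Option V) ∉ s.image some := by
  simp [Finset.mem_image]

section widths
variable {W : Type} [Fintype W]

lemma bdd_card_range {ι : Type} (X : ι → Finset W) :
    BddAbove (Set.range fun u => (X u).card) := by
  refine ⟨Fintype.card W, ?_⟩
  rintro k ⟨u, rfl⟩
  exact Finset.card_le_univ _

lemma card_le_sSup {ι : Type} (X : ι → Finset W) (u : ι) :
    (X u).card ≤ sSup (Set.range fun u => (X u).card) :=
  le_csSup (bdd_card_range X) ⟨u, rfl⟩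

lemma sSup_card_le {ι : Type} [Nonempty ι] (X : ι → Finset W) {n : ℕ}
    (h : ∀ u, (X u).card ≤ n) :
    sSup (Set.range fun u => (X u).card) ≤ n :=
  csSup_le (Set.range_nonempty _) (by rintro k ⟨u, rfl⟩; exact h u)

end widths

lemma connected_of_subsingleton {α : Type} {G : SimpleGraph α} [Subsingleton α]
    (h : Nonempty α) : G.Connected :=
  (SimpleGraph.connected_iff (G := G)).mpr ⟨fun a b => by rw [Subsingleton.elim a b], h⟩

/-- every graph on a finite vertex type has a (trivial) tree decomposition. -/
lemma twset_nonempty {W : Type} [Fintype W] (H : SimpleGraph W) :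
    { k | ∃ (ι : Type) (T : SimpleGraph ι) (X : ι → Finset W),
      IsTreeDecomp H T X ∧ sSup (Set.range fun u => (X u).card) - 1 = k }.Nonempty := by
  classical
  refine ⟨_, Unit, ⊥, fun _ => Finset.univ, ⟨⟨?_, ?_⟩, ?_, ?_, ?_⟩, rfl⟩
  · exact connected_of_subsingleton ⟨()⟩
  · intro x c hc
    cases c with
    | nil => exact hc.ne_nil rfl
    | cons h p => exact h.elim
  · exact fun x => ⟨(), Finset.mem_univ x⟩
  · exact fun a b _ => ⟨(), Finset.mem_univ a, Finset.mem_univ b⟩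
  · intro x
    exact connected_of_subsingleton ⟨⟨(), by simp⟩⟩

/-- every graph has a (trivial) path decomposition. -/
lemma pwset_nonempty {W : Type} [Fintype W] (H : SimpleGraph W) :
    { k | ∃ (r : ℕ) (X : Fin r → Finset W),
      IsPathDecomp H X ∧ sSup (Set.range fun i => (X i).card) - 1 = k }.Nonempty := by
  classical
  refine ⟨_, 1, fun _ => Finset.univ, ⟨?_, ?_, ?_⟩, rfl⟩
  · exact fun x => ⟨0, Finset.mem_univ x⟩
  · exact fun a b _ => ⟨0, Finset.mem_univ a, Finset.mem_univ b⟩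
  · intro i j l hij hjl
    intro x _ _
    exact absurd (hij.trans hjl) (by omega)


section constructions

variable {V : Type} [Fintype V] {G : SimpleGraph V} {v w : V}

/-- Leaf construction: given a tree decomposition of `G` with all bags of size `≤ n`,
`3 ≤ n`, build one for the subdivision with bags of size `≤ n`. -/
lemma subdiv_decomp_big {ι : Type} {T : SimpleGraph ι} {X : ι → Finset V}
    (hvw : G.Adj v w) (hdec : IsTreeDecomp G T X) {n : ℕ} (hn : 3 ≤ n)
    (hsup : ∀ u, (X u).card ≤ n) :
    ∃ (κ : Type) (T' : SimpleGraph κ) (Y : κ → Finset (Option V)),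
      IsTreeDecomp (subdiv G v w) T' Y ∧ ∀ p, (Y p).card ≤ n := by
  classical
  obtain ⟨hT, hcov, hedge, hconn⟩ := hdec
  obtain ⟨u0, hu0v, hu0w⟩ := hedge v w hvw
  have hvne : v ≠ w := hvw.ne
  -- the glued tree: a single extra node attached at u0
  set J := glued (⊥ : SimpleGraph PUnit) T id (fun _ => u0) with hJ
  have hJtree : J.IsTree :=
    glued_isTree (fun x => Reachable.refl x) (fun x y h => h.elim)
      (fun x c hc => by cases c with
        | nil => exact hc.ne_nil rfl
        | cons h p => exact h.elim) hT
  set Y : PUnit ⊕ ι → Finset (Option V) := fun p => match p with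
    | .inl _ => {Option.some v, Option.some w, Option.none}
    | .inr u => (X u).image Option.some with hY
  refine ⟨PUnit ⊕ ι, J, Y, ⟨hJtree, ?_, ?_, ?_⟩, ?_⟩
  · -- vertex cover
    rintro (_ | x)
    · exact ⟨.inl PUnit.unit, by simp [hY]⟩
    · obtain ⟨u, hu⟩ := hcov x
      exact ⟨.inr u, mem_image_some.mpr hu⟩
  · -- edge cover
    rintro (_ | a) (_ | b) hab
    · exact absurd hab subdiv_adj_none_none
    · rcases subdiv_adj_none_some.mp hab with rfl | rfl <;>
        exact ⟨.inl PUnit.unit, by simp [hY], by simp [hY]⟩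
    · rcases subdiv_adj_some_none.mp hab with rfl | rfl <;>
        exact ⟨.inl PUnit.unit, by simp [hY], by simp [hY]⟩
    · obtain ⟨hG, -, -⟩ := subdiv_adj_some_some.mp hab
      obtain ⟨u, hu1, hu2⟩ := hedge a b hG
      exact ⟨.inr u, mem_image_some.mpr hu1, mem_image_some.mpr hu2⟩
  · -- connectivity of vertex sets
    intro q
    match q with
    | Option.none =>
      -- the set is exactly {inl unit}
      have hset : ∀ p, Option.none ∈ Y p ↔ p = .inl PUnit.unit := by
        rintro (p | u)
        · simp [hY]
        · simp [hY]
      rw [SimpleGraph.connected_iff]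
      constructor
      · rintro ⟨p, hp⟩ ⟨p', hp'⟩
        have h1 : p = .inl PUnit.unit := (hset p).mp hp
        have h2 : p' = .inl PUnit.unit := (hset p').mp hp'
        subst h1; subst h2
        rfl
      · exact ⟨⟨.inl PUnit.unit, (hset _).mpr rfl⟩⟩
    | Option.some x =>
      set S' : Set (PUnit ⊕ ι) := {p | Option.some x ∈ Y p} with hS'
      have hinr_mem : ∀ u : ι, (Sum.inr u ∈ S') ↔ x ∈ X u := by
        intro u; simp [hS', hY, mem_image_some]
      have hinl_mem : (Sum.inl PUnit.unit ∈ S') ↔ (x = v ∨ x = w) := by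
        simp [hS', hY]
      have htransfer : ∀ (a b : ι) (ha : x ∈ X a) (hb : x ∈ X b),
          (J.induce S').Reachable ⟨.inr a, (hinr_mem a).mpr ha⟩ ⟨.inr b, (hinr_mem b).mpr hb⟩ := by
        intro a b ha hb
        exact induce_connected_transfer (Sum.inr : ι → PUnit ⊕ ι) (hconn x)
          (fun u hu => (hinr_mem u).mpr hu) (fun u u' _ _ huu => huu) ha hb
      rw [SimpleGraph.connected_iff]
      constructor
      · rintro ⟨p, hp⟩ ⟨p', hp'⟩
        rcases le_or_gt 1 0 with h | -
        · omega
        by_cases hx : x = v ∨ x = w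
        · -- reduce everything to ⟨inr u0⟩
          have hu0x : x ∈ X u0 := by rcases hx with rfl | rfl <;> assumption
          have hbase : ∀ (p : PUnit ⊕ ι) (hp : p ∈ S'),
              (J.induce S').Reachable ⟨p, hp⟩ ⟨.inr u0, (hinr_mem u0).mpr hu0x⟩ := by
            rintro (p | u) hp
            · -- the extra leaf: one step to inr u0
              have hadj : (J.induce S').Adj ⟨.inl p, hp⟩ ⟨.inr u0, (hinr_mem u0).mpr hu0x⟩ := by
                show J.Adj (.inl p) (.inr u0)
                exact glued_adj_inl_inr.mpr ⟨rfl, rfl⟩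
              exact hadj.reachable
            · exact htransfer u u0 ((hinr_mem u).mp hp) hu0x
          exact (hbase p hp).trans (hbase p' hp').symm
        · -- only inr nodes are present
          have hgetinr : ∀ (p : PUnit ⊕ ι), p ∈ S' → ∃ u, p = .inr u ∧ x ∈ X u := by
            rintro (p | u) hp
            · exact absurd ((hinl_mem).mp (by cases p; exact hp)) hx
            · exact ⟨u, rfl, (hinr_mem u).mp hp⟩
          obtain ⟨a, rfl, ha⟩ := hgetinr p hp
          obtain ⟨b, rfl, hb⟩ := hgetinr p' hp'
          exact htransfer a b ha hb
      · obtain ⟨u, hu⟩ := hcov x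
        exact ⟨⟨.inr u, (hinr_mem u).mpr hu⟩⟩
  · -- bag sizes
    rintro (p | u)
    · refine le_trans ?_ hn
      show ({Option.some v, Option.some w, Option.none} : Finset (Option V)).card ≤ 3
      have h2 : ({Option.some w, Option.none} : Finset (Option V)).card ≤ 2 :=
        le_trans (Finset.card_insert_le _ _) (by simp)
      exact le_trans (Finset.card_insert_le _ _) (by omega)
    · exact le_trans (Finset.card_image_le) (hsup u)

/-- Doubling construction: given a tree decomposition of `G` with all bags of size `≤ 2`,
build one for the subdivision with all bags of size `≤ 2`. -/
lemma subdiv_decomp_small {ι : Type} {T : SimpleGraph ι} {X : ι → Finset V}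
    (hvw : G.Adj v w) (hdec : IsTreeDecomp G T X)
    (hsup : ∀ u, (X u).card ≤ 2) :
    ∃ (κ : Type) (T' : SimpleGraph κ) (Y : κ → Finset (Option V)),
      IsTreeDecomp (subdiv G v w) T' Y ∧ ∀ p, (Y p).card ≤ 2 := by
  classical
  obtain ⟨hT, hcov, hedge, hconn⟩ := hdec
  have hvne : v ≠ w := hvw.ne
  set A : Set ι := {u | v ∈ X u} ∩ {u | w ∈ X u} with hA
  obtain ⟨u0, hu0v, hu0w⟩ := hedge v w hvw
  have hu0A : u0 ∈ A := ⟨hu0v, hu0w⟩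
  have hXA : ∀ u, u ∈ A → X u = {v, w} := by
    intro u hu
    refine (Finset.eq_of_subset_of_card_le ?_ ?_).symm
    · intro z hz
      rcases Finset.mem_insert.mp hz with rfl | hz
      · exact hu.1
      · rcases Finset.mem_singleton.mp hz with rfl
        exact hu.2
    · calc (X u).card ≤ 2 := hsup u
        _ = ({v, w} : Finset V).card := (Finset.card_pair hvne).symm
  have hAx : ∀ u, u ∈ A → ∀ x : V, x ∈ X u → (x = v ∨ x = w) := by
    intro u hu x hx
    rw [hXA u hu] at hx
    rcases Finset.mem_insert.mp hx with rfl | hx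
    · exact Or.inl rfl
    · exact Or.inr (Finset.mem_singleton.mp hx)
  have hAconn : (T.induce A).Connected := helly hT (hconn v) (hconn w) ⟨u0, hu0A⟩
  -- bridges in T
  have hbridge : ∀ a b, T.Adj a b → ¬ (T.deleteEdges {s(a, b)}).Reachable a b := by
    intro a b hab
    exact ((SimpleGraph.isBridge_iff).mp
      ((SimpleGraph.isAcyclic_iff_forall_adj_isBridge.mp hT.IsAcyclic) hab))
  -- the deleted edges
  set E₀ : Set (Sym2 ι) := {e | ∃ a b, e = s(a, b) ∧ a ∉ A ∧ b ∈ A ∧ w ∈ X a} with hE₀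
  set F : SimpleGraph ι := T.deleteEdges E₀ with hF
  have hFT : F ≤ T := SimpleGraph.deleteEdges_le E₀
  have hFacyc : F.IsAcyclic := isAcyclic_of_le hFT hT.IsAcyclic
  have hFadj : ∀ a b, F.Adj a b ↔ (T.Adj a b ∧ s(a, b) ∉ E₀) := by
    intro a b; rw [hF, SimpleGraph.deleteEdges_adj]
  have hE : ∀ a b, s(a, b) ∈ E₀ →
      (a ∉ A ∧ b ∈ A ∧ w ∈ X a) ∨ (b ∉ A ∧ a ∈ A ∧ w ∈ X b) := by
    intro a b he
    obtain ⟨a', b', heq, h1, h2, h3⟩ := he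
    rw [Sym2.eq_iff] at heq
    rcases heq with ⟨rfl, rfl⟩ | ⟨rfl, rfl⟩
    · exact Or.inl ⟨h1, h2, h3⟩
    · exact Or.inr ⟨h1, h2, h3⟩
  have hE' : ∀ a b, a ∉ A → b ∈ A → w ∈ X a → s(a, b) ∈ E₀ :=
    fun a b h1 h2 h3 => ⟨a, b, rfl, h1, h2, h3⟩
  have hf2 : ∀ a b, a ∈ A → b ∈ A → T.Adj a b → F.Adj a b := by
    intro a b ha hb hab
    refine (hFadj a b).mpr ⟨hab, fun he => ?_⟩
    rcases hE a b he with ⟨h1, -, -⟩ | ⟨h1, -, -⟩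
    · exact h1 ha
    · exact h1 hb
  have hf1 : ∀ a b, a ∉ A → b ∉ A → T.Adj a b → F.Adj a b := by
    intro a b ha hb hab
    refine (hFadj a b).mpr ⟨hab, fun he => ?_⟩
    rcases hE a b he with ⟨-, h2, -⟩ | ⟨-, h2, -⟩
    · exact hb h2
    · exact ha h2
  -- transfer of walks inside A
  have hAreach : ∀ (G' : SimpleGraph ι), (∀ p q, p ∈ A → q ∈ A → T.Adj p q → G'.Adj p q) →
      ∀ x y, x ∈ A → y ∈ A → G'.Reachable x y := by
    intro G' hadj x y hx hy
    obtain ⟨wz, hwz⟩ := exists_walk_of_induce_reachable (hAconn.preconnected ⟨x, hx⟩ ⟨y, hy⟩)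
    exact reach_transfer (S := A) id (fun a b ha hb hab => hadj a b ha hb hab) wz hwz
  -- attachment targets
  set tgtP : ι → Prop := fun a => a ∉ A ∧ w ∈ X a ∧ ∃ b, b ∈ A ∧ T.Adj a b with htgtP
  set tgt : ι → ι := fun a => if h : tgtP a then h.2.2.choose else u0 with htgt
  have htgtA : ∀ a, tgt a ∈ A := by
    intro a
    simp only [htgt]
    by_cases h : tgtP a
    · rw [dif_pos h]; exact h.2.2.choose_spec.1
    · rw [dif_neg h]; exact hu0A
  have htgt_adj : ∀ a, tgtP a → T.Adj a (tgt a) := by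
    intro a h
    simp only [htgt]
    rw [dif_pos h]
    exact h.2.2.choose_spec.2
  have htgt_u0 : tgt u0 = u0 := by
    simp only [htgt]
    rw [dif_neg]
    intro h
    exact h.1 hu0A
  -- unique attachment neighbour
  have hAnbU : ∀ a b b', a ∉ A → b ∈ A → b' ∈ A → T.Adj a b → T.Adj a b' → b = b' := by
    intro a b b' ha hb hb' hab hab'
    by_contra hne
    refine hbridge a b hab ?_
    have hadj' : (T.deleteEdges {s(a, b)}).Adj a b' := by
      rw [SimpleGraph.deleteEdges_adj]
      refine ⟨hab', fun hmem => ?_⟩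
      rw [Set.mem_singleton_iff, Sym2.eq_iff] at hmem
      rcases hmem with ⟨-, h2⟩ | ⟨h1, -⟩
      · exact hne h2.symm
      · exact ha (by rw [h1]; exact hb)
    refine hadj'.reachable.trans (hAreach (T.deleteEdges {s(a, b)}) ?_ b' b hb' hb)
    intro p q hp hq hpq
    rw [SimpleGraph.deleteEdges_adj]
    refine ⟨hpq, fun hmem => ?_⟩
    rw [Set.mem_singleton_iff, Sym2.eq_iff] at hmem
    rcases hmem with ⟨h1, -⟩ | ⟨-, h2⟩
    · exact ha (by rw [← h1]; exact hp)
    · exact ha (by rw [← h2]; exact hq)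
  have htgt_eq : ∀ a b, tgtP a → b ∈ A → T.Adj a b → tgt a = b :=
    fun a b ha hb hab => hAnbU a (tgt a) b ha.1 (htgtA a) hb (htgt_adj a ha) hab
  set InD : ι → Prop := fun a => a = u0 ∨ tgtP a with hInD
  -- monotonicity: F is contained in T minus any single deleted edge
  have hFle : ∀ e ∈ E₀, F ≤ T.deleteEdges {e} := by
    intro e he a b hab
    rw [SimpleGraph.deleteEdges_adj]
    obtain ⟨h1, h2⟩ := (hFadj a b).mp hab
    exact ⟨h1, fun hmem => h2 (Set.mem_singleton_iff.mp hmem ▸ he)⟩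
  -- inside-A edges survive deleting a crossing edge
  have hAdel : ∀ (a : ι), a ∉ A → ∀ p q, p ∈ A → q ∈ A → T.Adj p q →
      (T.deleteEdges {s(a, tgt a)}).Adj p q := by
    intro a ha p q hp hq hpq
    rw [SimpleGraph.deleteEdges_adj]
    refine ⟨hpq, fun hmem => ?_⟩
    rw [Set.mem_singleton_iff] at hmem
    rw [Sym2.eq_iff] at hmem
    rcases hmem with ⟨h1, -⟩ | ⟨-, h2⟩
    · exact ha (by rw [← h1]; exact hp)
    · exact ha (by rw [← h2]; exact hq)
  have hsep : ∀ a, tgtP a → ∀ z, z ∈ A → ¬ F.Reachable a z := by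
    intro a ha z hz hr
    refine hbridge a (tgt a) (htgt_adj a ha) ?_
    have h1 : (T.deleteEdges {s(a, tgt a)}).Reachable a z :=
      (hr.mono (hFle _ (hE' a (tgt a) ha.1 (htgtA a) ha.2.1)))
    exact h1.trans (hAreach _ (hAdel a ha.1) z (tgt a) hz (htgtA a))
  have hUNIQ : ∀ a a', InD a → InD a' → F.Reachable a a' → a = a' := by
    intro a a' hda hda' hr
    rcases hda with rfl | hpa
    · rcases hda' with rfl | hpa'
      · rfl
      · exact absurd (hr.symm) (hsep a' hpa' a hu0A)
    · rcases hda' with rfl | hpa'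
      · exact absurd hr (hsep a hpa a' hu0A)
      · by_contra hne
        refine hbridge a (tgt a) (htgt_adj a hpa) ?_
        have h1 : (T.deleteEdges {s(a, tgt a)}).Reachable a a' :=
          hr.mono (hFle _ (hE' a (tgt a) hpa.1 (htgtA a) hpa.2.1))
        have h2 : (T.deleteEdges {s(a, tgt a)}).Adj a' (tgt a') := by
          rw [SimpleGraph.deleteEdges_adj]
          refine ⟨htgt_adj a' hpa', fun hmem => ?_⟩
          rw [Set.mem_singleton_iff, Sym2.eq_iff] at hmem
          rcases hmem with ⟨h1', -⟩ | ⟨h1', -⟩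
          · exact hne h1'.symm
          · exact hpa'.1 (h1' ▸ htgtA a)
        have h3 := hAreach _ (hAdel a hpa.1) (tgt a') (tgt a) (htgtA a') (htgtA a)
        exact h1.trans (h2.reachable.trans h3)
  -- every vertex reaches a distinguished one in F
  have hREACH : ∀ x, ∃ a, InD a ∧ F.Reachable x a := by
    have main : ∀ (x z : ι) (wlk : T.Walk x z), z ∈ A → ∃ a, InD a ∧ F.Reachable x a := by
      intro x z wlk
      induction wlk with
      | nil => exact fun hz => ⟨u0, Or.inl rfl, hAreach F hf2 _ u0 hz hu0A⟩
      | @cons y m _ hadj p ih =>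
        intro hz
        by_cases hFa : F.Adj y m
        · obtain ⟨a, hDa, hra⟩ := ih hz
          exact ⟨a, hDa, hFa.reachable.trans hra⟩
        · have he : s(y, m) ∈ E₀ := by
            by_contra hne
            exact hFa ((hFadj y m).mpr ⟨hadj, hne⟩)
          rcases hE y m he with ⟨h1, h2, h3⟩ | ⟨h1, h2, h3⟩
          · exact ⟨y, Or.inr ⟨h1, h3, ⟨m, h2, hadj⟩⟩, Reachable.refl _⟩
          · exact ⟨u0, Or.inl rfl, hAreach F hf2 y u0 h2 hu0A⟩
    intro x
    obtain ⟨wlk⟩ := hT.isConnected.preconnected x u0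
    exact main x u0 wlk hu0A
  set d : ι → ι := fun x => (hREACH x).choose with hd
  have hdInD : ∀ x, InD (d x) := fun x => (hREACH x).choose_spec.1
  have hdreach : ∀ x, F.Reachable x (d x) := fun x => (hREACH x).choose_spec.2
  have hd_unique : ∀ x a, InD a → F.Reachable x a → d x = a :=
    fun x a hDa hr => hUNIQ (d x) a (hdInD x) hDa ((hdreach x).symm.trans hr)
  have hd2 : ∀ x y, F.Adj x y → d x = d y :=
    fun x y hxy => hd_unique x (d y) (hdInD y) (hxy.reachable.trans (hdreach y))
  have hdD : ∀ a, InD a → d a = a := fun a hDa => hd_unique a a hDa (Reachable.refl _)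
  set g : ι → ↥A := fun x => ⟨tgt x, htgtA x⟩ with hg
  set T₂ : SimpleGraph ↥A := T.induce A with hT₂def
  have hT₂ : T₂.IsTree := ⟨hAconn, isAcyclic_induce hT.IsAcyclic A⟩
  set J := glued F T₂ d g with hJ
  have hJtree : J.IsTree := glued_isTree hdreach hd2 hFacyc hT₂
  -- the bags
  set Y : ι ⊕ ↥A → Finset (Option V) := fun p => match p with
    | .inl u => if u ∈ A then ({Option.some v, Option.none} : Finset (Option V))
        else (X u).image Option.some
    | .inr _ => {Option.some w, Option.none} with hYdef
  have hYinr : ∀ (b : ↥A) (o : Option V),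
      o ∈ Y (.inr b) ↔ (o = Option.some w ∨ o = Option.none) := by
    intro b o
    show o ∈ ({Option.some w, Option.none} : Finset (Option V)) ↔ _
    simp
  have hYinlA : ∀ u, u ∈ A → ∀ o : Option V,
      (o ∈ Y (.inl u) ↔ (o = Option.some v ∨ o = Option.none)) := by
    intro u hu o
    show o ∈ (if u ∈ A then ({Option.some v, Option.none} : Finset (Option V))
      else (X u).image Option.some) ↔ _
    rw [if_pos hu]
    simp
  have hYinlN1 : ∀ u, u ∉ A → ∀ z : V, (Option.some z ∈ Y (.inl u) ↔ z ∈ X u) := by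
    intro u hu z
    show Option.some z ∈ (if u ∈ A then ({Option.some v, Option.none} : Finset (Option V))
      else (X u).image Option.some) ↔ _
    rw [if_neg hu]
    exact mem_image_some
  have hYinlN2 : ∀ u, u ∉ A → (Option.none ∉ Y (.inl u)) := by
    intro u hu h
    rw [show Y (.inl u) = (if u ∈ A then ({Option.some v, Option.none} : Finset (Option V))
      else (X u).image Option.some) from rfl, if_neg hu] at h
    exact none_not_mem_image_some h
  have hYinr_w : ∀ b : ↥A, Option.some w ∈ Y (.inr b) :=
    fun b => (hYinr b (Option.some w)).mpr (Or.inl rfl)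
  have hYinr_none : ∀ b : ↥A, Option.none ∈ Y (.inr b) :=
    fun b => (hYinr b Option.none).mpr (Or.inr rfl)
  have hYinlA_v : ∀ u, u ∈ A → Option.some v ∈ Y (.inl u) :=
    fun u hu => (hYinlA u hu (Option.some v)).mpr (Or.inl rfl)
  have hYinlA_none : ∀ u, u ∈ A → Option.none ∈ Y (.inl u) :=
    fun u hu => (hYinlA u hu Option.none).mpr (Or.inr rfl)
  -- the crossing edge at u0
  have hcross_u0 : J.Adj (.inl u0) (.inr ⟨u0, hu0A⟩) := by
    refine glued_adj_inl_inr.mpr ⟨hdD u0 (Or.inl rfl), ?_⟩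
    show (⟨tgt u0, htgtA u0⟩ : ↥A) = ⟨u0, hu0A⟩
    exact Subtype.ext htgt_u0
  refine ⟨ι ⊕ ↥A, J, Y, ⟨hJtree, ?_, ?_, ?_⟩, ?_⟩
  · -- vertex cover
    rintro (_ | x)
    · exact ⟨.inr ⟨u0, hu0A⟩, hYinr_none ⟨u0, hu0A⟩⟩
    · obtain ⟨u, hu⟩ := hcov x
      by_cases huA : u ∈ A
      · rcases hAx u huA x hu with rfl | rfl
        · exact ⟨.inl u, hYinlA_v u huA⟩
        · exact ⟨.inr ⟨u0, hu0A⟩, hYinr_w ⟨u0, hu0A⟩⟩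
      · exact ⟨.inl u, (hYinlN1 u huA x).mpr hu⟩
  · -- edge cover
    rintro (_ | a) (_ | b) hab
    · exact absurd hab subdiv_adj_none_none
    · rcases subdiv_adj_none_some.mp hab with rfl | rfl
      · exact ⟨.inl u0, hYinlA_none u0 hu0A, hYinlA_v u0 hu0A⟩
      · exact ⟨.inr ⟨u0, hu0A⟩, hYinr_none ⟨u0, hu0A⟩, hYinr_w ⟨u0, hu0A⟩⟩
    · rcases subdiv_adj_some_none.mp hab with rfl | rfl
      · exact ⟨.inl u0, hYinlA_v u0 hu0A, hYinlA_none u0 hu0A⟩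
      · exact ⟨.inr ⟨u0, hu0A⟩, hYinr_w ⟨u0, hu0A⟩, hYinr_none ⟨u0, hu0A⟩⟩
    · obtain ⟨hG, hn1, hn2⟩ := subdiv_adj_some_some.mp hab
      obtain ⟨u, hu1, hu2⟩ := hedge a b hG
      have huA : u ∉ A := by
        intro huA
        rcases hAx u huA a hu1 with rfl | rfl <;> rcases hAx u huA b hu2 with rfl | rfl
        · exact hG.ne rfl
        · exact hn1 ⟨rfl, rfl⟩
        · exact hn2 ⟨rfl, rfl⟩
        · exact hG.ne rfl
      exact ⟨.inl u, (hYinlN1 u huA a).mpr hu1, (hYinlN1 u huA b).mpr hu2⟩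
  · -- connectivity of vertex sets
    intro q
    -- helper: all inr vertices can reach ⟨inr u0⟩ inside any superset of the inr part
    have hinr_reach : ∀ (S' : Set (ι ⊕ ↥A)) (hS' : ∀ b : ↥A, Sum.inr b ∈ S') (b : ↥A),
        (J.induce S').Reachable ⟨.inr b, hS' b⟩ ⟨.inr ⟨u0, hu0A⟩, hS' _⟩ := by
      intro S' hS' b
      obtain ⟨wz⟩ := hAconn.preconnected b ⟨u0, hu0A⟩
      exact induce_reach_of_walk (G := T₂) (S := Set.univ) (Sum.inr : ↥A → ι ⊕ ↥A)
        (fun z _ => hS' z) (fun a b _ _ hab => hab) wz (fun z _ => Set.mem_univ z)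
        (Set.mem_univ _) (Set.mem_univ _)
    match q with
    | Option.none =>
      set S' : Set (ι ⊕ ↥A) := {p | Option.none ∈ Y p} with hS'
      have hmeminl : ∀ u : ι, Sum.inl u ∈ S' ↔ u ∈ A := by
        intro u
        by_cases hu : u ∈ A
        · simp only [hS', Set.mem_setOf_eq]
          exact ⟨fun _ => hu, fun _ => hYinlA_none u hu⟩
        · simp only [hS', Set.mem_setOf_eq]
          exact ⟨fun hmem => absurd hmem (hYinlN2 u hu), fun hmem => absurd hmem hu⟩
      have hmeminr : ∀ b : ↥A, Sum.inr b ∈ S' := fun b => hYinr_none b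
      rw [SimpleGraph.connected_iff]
      constructor
      · have hbase : ∀ (p : ι ⊕ ↥A) (hp : p ∈ S'),
            (J.induce S').Reachable ⟨p, hp⟩ ⟨.inr ⟨u0, hu0A⟩, hmeminr _⟩ := by
          rintro (u | b) hp
          · have huA : u ∈ A := (hmeminl u).mp hp
            have h1 : (J.induce S').Reachable ⟨.inl u, (hmeminl u).mpr huA⟩
                ⟨.inl u0, (hmeminl u0).mpr hu0A⟩ :=
              induce_connected_transfer (Sum.inl : ι → ι ⊕ ↥A) hAconn
                (fun z hz => (hmeminl z).mpr hz)
                (fun a b ha hb hab => hf2 a b ha hb hab) huA hu0A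
            refine h1.trans (SimpleGraph.Adj.reachable ?_)
            exact hcross_u0
          · exact hinr_reach S' hmeminr b
        rintro ⟨p, hp⟩ ⟨p', hp'⟩
        exact (hbase p hp).trans (hbase p' hp').symm
      · exact ⟨⟨.inr ⟨u0, hu0A⟩, hmeminr _⟩⟩
    | Option.some x =>
      set S' : Set (ι ⊕ ↥A) := {p | Option.some x ∈ Y p} with hS'
      by_cases hxv : x = v
      · -- the set is inl '' S_v
        have hmeminl : ∀ u : ι, Sum.inl u ∈ S' ↔ x ∈ X u := by
          intro u
          by_cases hu : u ∈ A
          · simp only [hS', Set.mem_setOf_eq]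
            constructor
            · intro _; rw [hxv]; exact hu.1
            · intro _
              show Option.some x ∈ Y (.inl u)
              rw [hxv]
              exact hYinlA_v u hu
          · simp only [hS', Set.mem_setOf_eq]
            exact hYinlN1 u hu x
        have hmeminr : ∀ b : ↥A, Sum.inr b ∉ S' := by
          intro b hmem
          rcases (hYinr b _).mp hmem with hh | hh
          · exact hvne (by injection (hxv ▸ hh))
          · exact (Option.some_ne_none x) hh
        rw [SimpleGraph.connected_iff]
        constructor
        · rintro ⟨p, hp⟩ ⟨p', hp'⟩
          rcases p with u | b
          swap
          · exact absurd hp (hmeminr b)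
          rcases p' with u' | b'
          swap
          · exact absurd hp' (hmeminr b')
          exact induce_connected_transfer (Sum.inl : ι → ι ⊕ ↥A) (hconn x)
            (fun z hz => (hmeminl z).mpr hz)
            (fun a b ha hb hab => by
              refine (hFadj a b).mpr ⟨hab, fun he => ?_⟩
              rcases hE a b he with ⟨h1, -, h3⟩ | ⟨h1, -, h3⟩
              · exact h1 ⟨hxv ▸ ha, h3⟩
              · exact h1 ⟨hxv ▸ hb, h3⟩)
            ((hmeminl u).mp hp) ((hmeminl u').mp hp')
        · exact ⟨⟨.inl u0, (hmeminl u0).mpr (by rw [hxv]; exact hu0v)⟩⟩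
      · by_cases hxw : x = w
        · -- the set is inl '' (S_w \ A) ∪ inr '' univ
          have hmeminl : ∀ u : ι, Sum.inl u ∈ S' ↔ (u ∉ A ∧ x ∈ X u) := by
            intro u
            by_cases hu : u ∈ A
            · simp only [hS', Set.mem_setOf_eq]
              constructor
              · intro hmem
                rcases (hYinlA u hu _).mp hmem with hh | hh
                · exact absurd (by injection hh) (by rw [hxw]; exact Ne.symm hvne)
                · exact absurd hh (Option.some_ne_none x)
              · rintro ⟨h1, -⟩; exact absurd hu h1
            · simp only [hS', Set.mem_setOf_eq]
              exact ⟨fun hmem => ⟨hu, (hYinlN1 u hu x).mp hmem⟩,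
                fun hh => (hYinlN1 u hu x).mpr hh.2⟩
          have hmeminr : ∀ b : ↥A, Sum.inr b ∈ S' := by
            intro b
            show Option.some x ∈ Y (.inr b)
            rw [hxw]
            exact hYinr_w b
          rw [SimpleGraph.connected_iff]
          constructor
          · have claim : ∀ (y z : ι) (wlk : T.Walk y z), z ∈ A →
                (∀ z' ∈ wlk.support, x ∈ X z') → y ∉ A →
                ∀ (hyS : Sum.inl y ∈ S'),
                (J.induce S').Reachable ⟨.inl y, hyS⟩ ⟨.inr ⟨u0, hu0A⟩, hmeminr _⟩ := by
              intro y z wlk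
              induction wlk with
              | nil => intro hz _ hyA _; exact absurd hz hyA
              | @cons y m _ hadj p ih =>
                intro hz hs hyA hyS
                have hyw : x ∈ X y := hs y (SimpleGraph.Walk.start_mem_support _)
                have hmw : x ∈ X m := hs m (by
                  rw [SimpleGraph.Walk.support_cons]
                  exact List.mem_cons_of_mem _ (SimpleGraph.Walk.start_mem_support _))
                by_cases hmA : m ∈ A
                · have hyP : tgtP y := ⟨hyA, hxw ▸ hyw, ⟨m, hmA, hadj⟩⟩
                  have hcross : J.Adj (.inl y) (.inr ⟨m, hmA⟩) := by
                    refine glued_adj_inl_inr.mpr ⟨hdD y (Or.inr hyP), ?_⟩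
                    show (⟨tgt y, htgtA y⟩ : ↥A) = ⟨m, hmA⟩
                    exact Subtype.ext (htgt_eq y m hyP hmA hadj)
                  have h1 : (J.induce S').Reachable ⟨.inl y, hyS⟩
                      ⟨.inr ⟨m, hmA⟩, hmeminr _⟩ := SimpleGraph.Adj.reachable hcross
                  exact h1.trans (hinr_reach S' hmeminr ⟨m, hmA⟩)
                · have hFym : F.Adj y m := hf1 y m hyA hmA hadj
                  have h1 : (J.induce S').Adj ⟨.inl y, hyS⟩
                      ⟨.inl m, (hmeminl m).mpr ⟨hmA, hmw⟩⟩ := hFym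
                  refine h1.reachable.trans (ih hz (fun z' hz' => hs z' ?_) hmA _)
                  rw [SimpleGraph.Walk.support_cons]
                  exact List.mem_cons_of_mem _ hz'
            have hbase : ∀ (p : ι ⊕ ↥A) (hp : p ∈ S'),
                (J.induce S').Reachable ⟨p, hp⟩ ⟨.inr ⟨u0, hu0A⟩, hmeminr _⟩ := by
              rintro (u | b) hp
              swap
              · exact hinr_reach S' hmeminr b
              obtain ⟨huA, hux⟩ := (hmeminl u).mp hp
              obtain ⟨wz, hwz⟩ := exists_walk_of_induce_reachable
                ((hconn x).preconnected ⟨u, hux⟩ ⟨u0, hxw ▸ hu0w⟩)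
              exact claim u u0 wz hu0A hwz huA hp
            rintro ⟨p, hp⟩ ⟨p', hp'⟩
            exact (hbase p hp).trans (hbase p' hp').symm
          · exact ⟨⟨.inr ⟨u0, hu0A⟩, hmeminr _⟩⟩
        · -- x ∉ {v, w} : the set is inl '' S_x, disjoint from A
          have hxA : ∀ u, u ∈ A → x ∉ X u := by
            intro u hu hx
            rcases hAx u hu x hx with rfl | rfl
            · exact hxv rfl
            · exact hxw rfl
          have hmeminl : ∀ u : ι, Sum.inl u ∈ S' ↔ x ∈ X u := by
            intro u
            by_cases hu : u ∈ A
            · simp only [hS', Set.mem_setOf_eq]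
              constructor
              · intro hmem
                rcases (hYinlA u hu _).mp hmem with hh | hh
                · exact absurd (by injection hh) hxv
                · exact absurd hh (Option.some_ne_none x)
              · intro hh; exact absurd hh (hxA u hu)
            · simp only [hS', Set.mem_setOf_eq]
              exact hYinlN1 u hu x
          have hmeminr : ∀ b : ↥A, Sum.inr b ∉ S' := by
            intro b hmem
            rcases (hYinr b _).mp hmem with hh | hh
            · exact hxw (by injection hh)
            · exact (Option.some_ne_none x) hh
          rw [SimpleGraph.connected_iff]
          constructor
          · rintro ⟨p, hp⟩ ⟨p', hp'⟩
            rcases p with u | b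
            swap
            · exact absurd hp (hmeminr b)
            rcases p' with u' | b'
            swap
            · exact absurd hp' (hmeminr b')
            exact induce_connected_transfer (Sum.inl : ι → ι ⊕ ↥A) (hconn x)
              (fun z hz => (hmeminl z).mpr hz)
              (fun a b ha hb hab => by
                refine (hFadj a b).mpr ⟨hab, fun he => ?_⟩
                rcases hE a b he with ⟨-, h2, -⟩ | ⟨-, h2, -⟩
                · exact hxA b h2 hb
                · exact hxA a h2 ha)
              ((hmeminl u).mp hp) ((hmeminl u').mp hp')
          · obtain ⟨u, hu⟩ := hcov x
            exact ⟨⟨.inl u, (hmeminl u).mpr hu⟩⟩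
  · -- bag sizes
    rintro (u | b)
    · by_cases hu : u ∈ A
      · have : Y (.inl u) = ({Option.some v, Option.none} : Finset (Option V)) := if_pos hu
        rw [this]
        exact le_trans (Finset.card_insert_le _ _) (by simp)
      · have : Y (.inl u) = (X u).image Option.some := if_neg hu
        rw [this]
        exact le_trans (Finset.card_image_le) (hsup u)
    · show ({Option.some w, Option.none} : Finset (Option V)).card ≤ 2
      exact le_trans (Finset.card_insert_le _ _) (by simp)

end constructions

section assembly

variable {V : Type} [Fintype V] {G : SimpleGraph V} {v w : V}

lemma tw_le_subdiv (hvw : G.Adj v w) : treewidth (subdiv G v w) ≤ treewidth G := by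
  classical
  obtain ⟨ι, T, X, hdec, hk⟩ := Nat.sInf_mem (twset_nonempty G)
  haveI : Nonempty ι := hdec.1.isConnected.nonempty
  obtain ⟨u0, hu0v, hu0w⟩ := hdec.2.2.1 v w hvw
  set n := sSup (Set.range fun u => (X u).card) with hn
  have h2n : 2 ≤ n := by
    refine le_trans ?_ (card_le_sSup X u0)
    rw [← Finset.card_pair hvw.ne]
    refine Finset.card_le_card ?_
    intro z hz
    rcases Finset.mem_insert.mp hz with rfl | hz
    · exact hu0v
    · rw [Finset.mem_singleton.mp hz]; exact hu0w
  rcases le_or_gt n 2 with hle | hlt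
  · have hall : ∀ u, (X u).card ≤ 2 := fun u => le_trans (card_le_sSup X u) hle
    obtain ⟨κ, T', Y, hdec', hcard⟩ := subdiv_decomp_small hvw hdec hall
    haveI : Nonempty κ := hdec'.1.isConnected.nonempty
    have h1 : treewidth (subdiv G v w) ≤ sSup (Set.range fun p => (Y p).card) - 1 :=
      Nat.sInf_le ⟨κ, T', Y, hdec', rfl⟩
    have h2 : sSup (Set.range fun p => (Y p).card) ≤ 2 := sSup_card_le Y hcard
    refine le_trans h1 (le_trans ?_ (le_of_eq hk))
    exact Nat.sub_le_sub_right (le_trans h2 h2n) 1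
  · have hall : ∀ u, (X u).card ≤ n := fun u => card_le_sSup X u
    obtain ⟨κ, T', Y, hdec', hcard⟩ := subdiv_decomp_big hvw hdec hlt hall
    haveI : Nonempty κ := hdec'.1.isConnected.nonempty
    have h1 : treewidth (subdiv G v w) ≤ sSup (Set.range fun p => (Y p).card) - 1 :=
      Nat.sInf_le ⟨κ, T', Y, hdec', rfl⟩
    have h2 : sSup (Set.range fun p => (Y p).card) ≤ n := sSup_card_le Y hcard
    refine le_trans h1 (le_trans ?_ (le_of_eq hk))
    exact Nat.sub_le_sub_right h2 1

lemma tw_subdiv_le (hvw : G.Adj v w) : treewidth G ≤ treewidth (subdiv G v w) := by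
  classical
  obtain ⟨ι, T, Y, ⟨hT, hcov, hedge, hconn⟩, hk⟩ :=
    Nat.sInf_mem (twset_nonempty (subdiv G v w))
  haveI : Nonempty ι := hT.isConnected.nonempty
  set X : ι → Finset V := fun u => (Y u).image (fun o => o.getD w) with hX
  have hXmem : ∀ (u : ι) (x : V), x ∈ X u ↔ (some x ∈ Y u ∨ (x = w ∧ none ∈ Y u)) :=
    fun u x => mem_image_getD
  have hdec' : IsTreeDecomp G T X := by
    refine ⟨hT, ?_, ?_, ?_⟩
    · intro x
      obtain ⟨u, hu⟩ := hcov (some x)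
      exact ⟨u, (hXmem u x).mpr (Or.inl hu)⟩
    · intro a b hab
      by_cases hcase : (a = v ∧ b = w) ∨ (a = w ∧ b = v)
      · obtain ⟨u, h1, h2⟩ := hedge (some v) none (subdiv_adj_some_none.mpr (Or.inl rfl))
        have hv : v ∈ X u := (hXmem u v).mpr (Or.inl h1)
        have hw : w ∈ X u := (hXmem u w).mpr (Or.inr ⟨rfl, h2⟩)
        rcases hcase with ⟨rfl, rfl⟩ | ⟨rfl, rfl⟩
        · exact ⟨u, hv, hw⟩
        · exact ⟨u, hw, hv⟩
      · rw [not_or] at hcase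
        obtain ⟨u, h1, h2⟩ := hedge (some a) (some b)
          (subdiv_adj_some_some.mpr ⟨hab, fun hh => hcase.1 hh, fun hh => hcase.2 hh⟩)
        exact ⟨u, (hXmem u a).mpr (Or.inl h1), (hXmem u b).mpr (Or.inl h2)⟩
    · intro x
      by_cases hxw : x = w
      · subst hxw
        have hset : {u : ι | x ∈ X u} = {u : ι | some x ∈ Y u} ∪ {u : ι | none ∈ Y u} := by
          ext u
          constructor
          · intro hh
            rcases (hXmem u x).mp hh with hh | ⟨-, hh⟩
            · exact Or.inl hh
            · exact Or.inr hh
          · intro hh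
            rcases hh with hh | hh
            · exact (hXmem u x).mpr (Or.inl hh)
            · exact (hXmem u x).mpr (Or.inr ⟨rfl, hh⟩)
        rw [hset]
        obtain ⟨m, hm1, hm2⟩ := hedge none (some x) (subdiv_adj_none_some.mpr (Or.inr rfl))
        exact SimpleGraph.induce_union_connected (hconn (some x)).preconnected (hconn none).preconnected ⟨m, hm2, hm1⟩
      · have hset : {u : ι | x ∈ X u} = {u : ι | some x ∈ Y u} := by
          ext u
          constructor
          · intro hh
            rcases (hXmem u x).mp hh with hh | ⟨hh, -⟩
            · exact hh
            · exact absurd hh hxw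
          · intro hh
            exact (hXmem u x).mpr (Or.inl hh)
        rw [hset]
        exact hconn (some x)
  have h1 : treewidth G ≤ sSup (Set.range fun u => (X u).card) - 1 :=
    Nat.sInf_le ⟨ι, T, X, hdec', rfl⟩
  have h2 : sSup (Set.range fun u => (X u).card) ≤ sSup (Set.range fun u => (Y u).card) :=
    sSup_card_le X (fun u => le_trans Finset.card_image_le (card_le_sSup Y u))
  refine le_trans h1 (le_trans ?_ (le_of_eq hk))
  exact Nat.sub_le_sub_right h2 1

lemma pw_subdiv_le (hvw : G.Adj v w) : pathwidth G ≤ pathwidth (subdiv G v w) := by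
  classical
  obtain ⟨r, Y, ⟨hcov, hedge, hinterp⟩, hk⟩ :=
    Nat.sInf_mem (pwset_nonempty (subdiv G v w))
  obtain ⟨iv, hiv⟩ := hcov (some v)
  haveI : Nonempty (Fin r) := ⟨iv⟩
  set X : Fin r → Finset V := fun i => (Y i).image (fun o => o.getD w) with hX
  have hXmem : ∀ (i : Fin r) (x : V), x ∈ X i ↔ (some x ∈ Y i ∨ (x = w ∧ none ∈ Y i)) :=
    fun i x => mem_image_getD
  have hdec' : IsPathDecomp G X := by
    refine ⟨?_, ?_, ?_⟩
    · intro x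
      obtain ⟨i, hi⟩ := hcov (some x)
      exact ⟨i, (hXmem i x).mpr (Or.inl hi)⟩
    · intro a b hab
      by_cases hcase : (a = v ∧ b = w) ∨ (a = w ∧ b = v)
      · obtain ⟨i, h1, h2⟩ := hedge (some v) none (subdiv_adj_some_none.mpr (Or.inl rfl))
        have hv : v ∈ X i := (hXmem i v).mpr (Or.inl h1)
        have hw : w ∈ X i := (hXmem i w).mpr (Or.inr ⟨rfl, h2⟩)
        rcases hcase with ⟨rfl, rfl⟩ | ⟨rfl, rfl⟩
        · exact ⟨i, hv, hw⟩
        · exact ⟨i, hw, hv⟩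
      · rw [not_or] at hcase
        obtain ⟨i, h1, h2⟩ := hedge (some a) (some b)
          (subdiv_adj_some_some.mpr ⟨hab, fun hh => hcase.1 hh, fun hh => hcase.2 hh⟩)
        exact ⟨i, (hXmem i a).mpr (Or.inl h1), (hXmem i b).mpr (Or.inl h2)⟩
    · intro i j l hij hjl x hxi hxl
      by_cases hxw : x = w
      · obtain ⟨m, hm1, hm2⟩ := hedge none (some w) (subdiv_adj_none_some.mpr (Or.inr rfl))
        -- Y m contains both `none` and `some w`
        have hYm : ∀ o : Option V, (o = some w ∨ o = none) → o ∈ Y m := by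
          rintro o (rfl | rfl)
          · exact hm2
          · exact hm1
        have hxi' : some w ∈ Y i ∨ none ∈ Y i := by
          rcases (hXmem i x).mp hxi with hh | ⟨-, hh⟩
          · exact Or.inl (hxw ▸ hh)
          · exact Or.inr hh
        have hxl' : some w ∈ Y l ∨ none ∈ Y l := by
          rcases (hXmem l x).mp hxl with hh | ⟨-, hh⟩
          · exact Or.inl (hxw ▸ hh)
          · exact Or.inr hh
        rcases lt_trichotomy j m with hjm | hjm | hjm
        · -- use the element witnessing membership in `Y i`
          rcases hxi' with hh | hh
          · have := hinterp i j m hij hjm (some w) hh (hYm _ (Or.inl rfl))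
            exact (hXmem j x).mpr (Or.inl (by rw [hxw]; exact this))
          · have := hinterp i j m hij hjm none hh (hYm _ (Or.inr rfl))
            exact (hXmem j x).mpr (Or.inr ⟨hxw, this⟩)
        · subst hjm
          exact (hXmem j x).mpr (Or.inl (by rw [hxw]; exact hYm _ (Or.inl rfl)))
        · rcases hxl' with hh | hh
          · have := hinterp m j l hjm hjl (some w) (hYm _ (Or.inl rfl)) hh
            exact (hXmem j x).mpr (Or.inl (by rw [hxw]; exact this))
          · have := hinterp m j l hjm hjl none (hYm _ (Or.inr rfl)) hh
            exact (hXmem j x).mpr (Or.inr ⟨hxw, this⟩)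
      · have h1 : some x ∈ Y i := by
          rcases (hXmem i x).mp hxi with hh | ⟨hh, -⟩
          · exact hh
          · exact absurd hh hxw
        have h2 : some x ∈ Y l := by
          rcases (hXmem l x).mp hxl with hh | ⟨hh, -⟩
          · exact hh
          · exact absurd hh hxw
        exact (hXmem j x).mpr (Or.inl (hinterp i j l hij hjl (some x) h1 h2))
  have h1 : pathwidth G ≤ sSup (Set.range fun i => (X i).card) - 1 :=
    Nat.sInf_le ⟨r, X, hdec', rfl⟩
  have h2 : sSup (Set.range fun i => (X i).card) ≤ sSup (Set.range fun i => (Y i).card) :=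
    sSup_card_le X (fun i => le_trans Finset.card_image_le (card_le_sSup Y i))
  refine le_trans h1 (le_trans ?_ (le_of_eq hk))
  exact Nat.sub_le_sub_right h2 1

lemma pw_le_subdiv (hvw : G.Adj v w) : pathwidth (subdiv G v w) ≤ pathwidth G + 1 := by
  classical
  obtain ⟨r, X, ⟨hcov, hedge, hinterp⟩, hk⟩ := Nat.sInf_mem (pwset_nonempty G)
  obtain ⟨i0, hi0v, hi0w⟩ := hedge v w hvw
  haveI : Nonempty (Fin r) := ⟨i0⟩
  set Y : Fin r → Finset (Option V) := fun i =>
    if i = i0 then insert none ((X i).image some) else (X i).image some with hY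
  have hYsome : ∀ (i : Fin r) (z : V), some z ∈ Y i ↔ z ∈ X i := by
    intro i z
    by_cases hi : i = i0
    · show some z ∈ (if i = i0 then insert none ((X i).image some) else (X i).image some) ↔ _
      rw [if_pos hi, Finset.mem_insert]
      simp [mem_image_some]
    · show some z ∈ (if i = i0 then insert none ((X i).image some) else (X i).image some) ↔ _
      rw [if_neg hi]
      exact mem_image_some
  have hYnone : ∀ i : Fin r, none ∈ Y i ↔ i = i0 := by
    intro i
    by_cases hi : i = i0
    · show (none : Option V) ∈ (if i = i0 then insert none ((X i).image some)
        else (X i).image some) ↔ _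
      rw [if_pos hi]
      simp [hi]
    · show (none : Option V) ∈ (if i = i0 then insert none ((X i).image some)
        else (X i).image some) ↔ _
      rw [if_neg hi]
      simpa [hi] using none_not_mem_image_some (s := X i)
  have hdec' : IsPathDecomp (subdiv G v w) Y := by
    refine ⟨?_, ?_, ?_⟩
    · rintro (_ | x)
      · exact ⟨i0, (hYnone i0).mpr rfl⟩
      · obtain ⟨i, hi⟩ := hcov x
        exact ⟨i, (hYsome i x).mpr hi⟩
    · rintro (_ | a) (_ | b) hab
      · exact absurd hab subdiv_adj_none_none
      · rcases subdiv_adj_none_some.mp hab with rfl | rfl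
        · exact ⟨i0, (hYnone i0).mpr rfl, (hYsome i0 _).mpr hi0v⟩
        · exact ⟨i0, (hYnone i0).mpr rfl, (hYsome i0 _).mpr hi0w⟩
      · rcases subdiv_adj_some_none.mp hab with rfl | rfl
        · exact ⟨i0, (hYsome i0 _).mpr hi0v, (hYnone i0).mpr rfl⟩
        · exact ⟨i0, (hYsome i0 _).mpr hi0w, (hYnone i0).mpr rfl⟩
      · obtain ⟨hG, -, -⟩ := subdiv_adj_some_some.mp hab
        obtain ⟨i, h1, h2⟩ := hedge a b hG
        exact ⟨i, (hYsome i _).mpr h1, (hYsome i _).mpr h2⟩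
    · rintro i j l hij hjl (_ | z) hxi hxl
      · have h1 : i = i0 := (hYnone i).mp hxi
        have h2 : l = i0 := (hYnone l).mp hxl
        exact absurd (hij.trans hjl) (by rw [h1, h2]; exact lt_irrefl _)
      · exact (hYsome j z).mpr
          (hinterp i j l hij hjl z ((hYsome i z).mp hxi) ((hYsome l z).mp hxl))
  have hcard : ∀ i, (Y i).card ≤ (X i).card + 1 := by
    intro i
    by_cases hi : i = i0
    · have he : Y i = insert none ((X i).image some) := if_pos hi
      rw [he]
      have h3 : ((X i).image some).card ≤ (X i).card := Finset.card_image_le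
      have h4 := Finset.card_insert_le (none : Option V) ((X i).image some)
      exact le_trans h4 (Nat.add_le_add_right h3 1)
    · have he : Y i = (X i).image some := if_neg hi
      rw [he]
      have h3 : ((X i).image some).card ≤ (X i).card := Finset.card_image_le
      exact le_trans h3 (Nat.le_succ _)
  have h1 : pathwidth (subdiv G v w) ≤ sSup (Set.range fun i => (Y i).card) - 1 :=
    Nat.sInf_le ⟨r, Y, hdec', rfl⟩
  have h2 : sSup (Set.range fun i => (Y i).card) ≤
      sSup (Set.range fun i => (X i).card) + 1 :=
    sSup_card_le Y (fun i => le_trans (hcard i)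
      (Nat.add_le_add_right (card_le_sSup X i) 1))
  have h3 : 1 ≤ sSup (Set.range fun i => (X i).card) :=
    le_trans (Finset.card_pos.mpr ⟨v, hi0v⟩) (card_le_sSup X i0)
  have hk1 : pathwidth G = sSup (Set.range fun i => (X i).card) - 1 := hk.symm
  rw [hk1, Nat.sub_add_cancel h3]
  refine le_trans h1 ?_
  exact Nat.sub_le_iff_le_add.mpr h2

end assembly

end TWAux


open TWAux in
/-- Subdividing an edge `{v, w}` leaves the tree-width unchanged and increases the
path-width by at most one (and never decreases it). -/
theorem treewidth_pathwidth_subdiv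
    {V : Type} [Fintype V] (G : SimpleGraph V) (v w : V) (h : G.Adj v w) :
    treewidth (subdiv G v w) = treewidth G ∧
    (pathwidth G ≤ pathwidth (subdiv G v w) ∧
      pathwidth (subdiv G v w) ≤ pathwidth G + 1) :=
  ⟨le_antisymm (tw_le_subdiv h) (tw_subdiv_le h), pw_subdiv_le h, pw_le_subdiv h⟩
end

section
/- For every d ≥ 1 and every finite simple graph G, it holds that tw(G) ≤ tw(G^d) ≤ (tw(G) + 1)·(1 + Δ(G)·Σ_{i=0}^{d−1} (Δ(G) − 1)^i) − 1 and pw(G) ≤ pw(G^d) ≤ (pw(G) + 1)·(1 + Δ(G)·Σ_{i=0}^{d−1} (Δ(G) − 1)^i) − 1, where G^d is the d-th power of G and Δ(G) is the maximum degree of G. -/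
open SimpleGraph

/-- `graphPow G d` is the `d`-th power `G^d` of `G`: two distinct vertices are adjacent
iff there is a path of length at most `d` between them in `G`. -/
def graphPow {V : Type} (G : SimpleGraph V) (d : ℕ) : SimpleGraph V where
  Adj x y := x ≠ y ∧ ∃ p : G.Path x y, p.1.length ≤ d
  symm := by
    constructor
    rintro x y ⟨hxy, p, hp⟩
    exact ⟨hxy.symm, ⟨p.1.reverse, p.2.reverse⟩, by simpa using hp⟩
  loopless := by
    constructor
    rintro x ⟨hxx, _⟩
    exact hxx rfl

namespace TWAux

variable {V : Type} [Fintype V] [DecidableEq V] {G : SimpleGraph V} [DecidableRel G.Adj]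

open Classical in
noncomputable def ball (G : SimpleGraph V) (v : V) (r : ℕ) : Finset V :=
  Finset.univ.filter fun z => ∃ p : G.Walk v z, p.length ≤ r

lemma mem_ball {v z : V} {r : ℕ} :
    z ∈ ball G v r ↔ ∃ p : G.Walk v z, p.length ≤ r := by
  classical
  simp [ball]

lemma self_mem_ball (v : V) (r : ℕ) : v ∈ ball G v r :=
  mem_ball.2 ⟨Walk.nil, by simp⟩

lemma ball_mono {v : V} {r r' : ℕ} (h : r ≤ r') : ball G v r ⊆ ball G v r' := by
  intro z hz
  obtain ⟨p, hp⟩ := mem_ball.1 hz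
  exact mem_ball.2 ⟨p, hp.trans h⟩

lemma exists_adj_of_ball_succ {v z : V} {r : ℕ}
    (h1 : z ∈ ball G v (r + 1)) (h2 : z ∉ ball G v r) :
    ∃ y, G.Adj y z ∧ y ∈ ball G v r := by
  obtain ⟨p, hp⟩ := mem_ball.1 h1
  cases hrev : p.reverse with
  | nil =>
    exact absurd (self_mem_ball _ _) h2
  | @cons _ y _ h q =>
    refine ⟨y, h.symm, mem_ball.2 ⟨q.reverse, ?_⟩⟩
    have hl : q.length + 1 = p.length := by
      have := congrArg Walk.length hrev
      simpa using this.symm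
    simp only [Walk.length_reverse]
    omega


lemma sphere_one_card_le (v : V) :
    (ball G v 1 \ ball G v 0).card ≤ G.maxDegree := by
  classical
  have hsub : ball G v 1 \ ball G v 0 ⊆ G.neighborFinset v := by
    intro z hz
    rw [Finset.mem_sdiff] at hz
    obtain ⟨y, hadj, hy⟩ := exists_adj_of_ball_succ hz.1 hz.2
    obtain ⟨p, hp⟩ := mem_ball.1 hy
    have : v = y := Walk.eq_of_length_eq_zero (Nat.le_zero.1 hp)
    rw [mem_neighborFinset]
    exact this ▸ hadj
  exact le_trans (Finset.card_le_card hsub) (G.degree_le_maxDegree v)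

lemma sphere_card_le (v : V) (r : ℕ) :
    (ball G v (r + 1) \ ball G v r).card ≤ G.maxDegree * (G.maxDegree - 1) ^ r := by
  classical
  induction r with
  | zero => simpa using sphere_one_card_le (G := G) v
  | succ r ih =>
    set s := ball G v (r + 2) \ ball G v (r + 1) with hs
    set t := ball G v (r + 1) \ ball G v r with ht
    -- choice of a predecessor
    have hpred : ∀ z ∈ s, ∃ y, G.Adj y z ∧ y ∈ t := by
      intro z hz
      rw [hs, Finset.mem_sdiff] at hz
      obtain ⟨y, hadj, hy⟩ := exists_adj_of_ball_succ hz.1 hz.2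
      refine ⟨y, hadj, ?_⟩
      rw [ht, Finset.mem_sdiff]
      refine ⟨hy, fun hyr => hz.2 ?_⟩
      obtain ⟨p, hp⟩ := mem_ball.1 hyr
      exact mem_ball.2 ⟨p.concat hadj, by simp; omega⟩
    choose! f hf1 hf2 using hpred
    have key : s.card ≤ (G.maxDegree - 1) * t.card := by
      refine Finset.card_le_mul_card_image_of_maps_to hf2 _ ?_
      intro y hy
      -- y ∈ t has a neighbor x0 in ball r
      rw [ht, Finset.mem_sdiff] at hy
      obtain ⟨x0, hx0adj, hx0⟩ := exists_adj_of_ball_succ hy.1 hy.2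
      have hsub : {a ∈ s | f a = y} ⊆ (G.neighborFinset y).erase x0 := by
        intro z hz
        rw [Finset.mem_filter] at hz
        refine Finset.mem_erase.2 ⟨?_, ?_⟩
        · rintro rfl
          have hzs := hz.1
          rw [hs, Finset.mem_sdiff] at hzs
          exact hzs.2 (ball_mono (Nat.le_succ r) hx0)
        · rw [mem_neighborFinset]
          have := hf1 z hz.1
          rw [hz.2] at this
          exact this
      refine le_trans (Finset.card_le_card hsub) ?_
      rw [Finset.card_erase_of_mem (by rw [mem_neighborFinset]; exact hx0adj.symm)]
      exact Nat.sub_le_sub_right (G.degree_le_maxDegree y) 1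
    calc s.card ≤ (G.maxDegree - 1) * t.card := key
      _ ≤ (G.maxDegree - 1) * (G.maxDegree * (G.maxDegree - 1) ^ r) :=
        Nat.mul_le_mul_left _ ih
      _ = G.maxDegree * (G.maxDegree - 1) ^ (r + 1) := by ring

lemma ball_card_le (v : V) (d : ℕ) :
    (ball G v d).card ≤ 1 + G.maxDegree * ∑ i ∈ Finset.range d, (G.maxDegree - 1) ^ i := by
  induction d with
  | zero =>
    have : ball G v 0 ⊆ {v} := by
      intro z hz
      obtain ⟨p, hp⟩ := mem_ball.1 hz
      simp [(Walk.eq_of_length_eq_zero (Nat.le_zero.1 hp)).symm]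
    simpa using Finset.card_le_card this
  | succ d ih =>
    have hsub : ball G v (d + 1) ⊆ ball G v d ∪ (ball G v (d + 1) \ ball G v d) := by
      intro z hz
      by_cases h : z ∈ ball G v d
      · exact Finset.mem_union_left _ h
      · exact Finset.mem_union_right _ (Finset.mem_sdiff.2 ⟨hz, h⟩)
    calc (ball G v (d + 1)).card
        ≤ (ball G v d).card + (ball G v (d + 1) \ ball G v d).card :=
          le_trans (Finset.card_le_card hsub) (Finset.card_union_le _ _)
      _ ≤ (1 + G.maxDegree * ∑ i ∈ Finset.range d, (G.maxDegree - 1) ^ i)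
            + G.maxDegree * (G.maxDegree - 1) ^ d := Nat.add_le_add ih (sphere_card_le v d)
      _ = 1 + G.maxDegree * ∑ i ∈ Finset.range (d + 1), (G.maxDegree - 1) ^ i := by
          rw [Finset.sum_range_succ]; ring

noncomputable def bigBag (G : SimpleGraph V) [DecidableRel G.Adj] (d : ℕ) {ι : Type}
    (X : ι → Finset V) (u : ι) : Finset V :=
  (X u).biUnion fun w => ball G w d

lemma mem_bigBag {d : ℕ} {ι : Type} {X : ι → Finset V} {u : ι} {x : V} :
    x ∈ bigBag G d X u ↔ ∃ w ∈ X u, ∃ p : G.Walk w x, p.length ≤ d := by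
  simp [bigBag, mem_ball]

lemma subset_bigBag {d : ℕ} {ι : Type} (X : ι → Finset V) (u : ι) :
    X u ⊆ bigBag G d X u := fun x hx =>
  mem_bigBag.2 ⟨x, hx, Walk.nil, by simp⟩

lemma bigBag_card_le {d : ℕ} {ι : Type} (X : ι → Finset V) (u : ι) :
    (bigBag G d X u).card ≤
      (X u).card * (1 + G.maxDegree * ∑ i ∈ Finset.range d, (G.maxDegree - 1) ^ i) :=
  Finset.card_biUnion_le_card_mul _ _ _ fun w _ => ball_card_le w d

lemma reachable_induce_mono {ι : Type} (T : SimpleGraph ι) {A S : Set ι} (h : A ⊆ S)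
    {a b : ι} (ha : a ∈ A) (hb : b ∈ A)
    (hr : (T.induce A).Reachable ⟨a, ha⟩ ⟨b, hb⟩) :
    (T.induce S).Reachable ⟨a, h ha⟩ ⟨b, h hb⟩ := by
  exact Reachable.map (⟨fun x => ⟨x.1, h x.2⟩, fun hadj => hadj⟩ : T.induce A →g T.induce S) hr

lemma reach_chain {ι : Type} {T : SimpleGraph ι} {X : ι → Finset V} {S : Set ι}
    (hX2 : ∀ a b : V, G.Adj a b → ∃ u, a ∈ X u ∧ b ∈ X u)
    (hX3 : ∀ z : V, (T.induce {u : ι | z ∈ X u}).Connected) :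
    ∀ {w w' : V} (p : G.Walk w w'),
      (∀ z ∈ p.support, {u : ι | z ∈ X u} ⊆ S) →
      ∀ (u u' : ι) (hu : w ∈ X u) (hu' : w' ∈ X u')
        (hus : u ∈ S) (hu's : u' ∈ S),
      (T.induce S).Reachable ⟨u, hus⟩ ⟨u', hu's⟩ := by
  intro w w' p
  induction p with
  | nil =>
    rename_i a
    intro hsupp u u' hu hu' hus hu's
    have hA : {t : ι | a ∈ X t} ⊆ S := hsupp a (Walk.start_mem_support _)
    exact reachable_induce_mono T hA hu hu' ((hX3 a).preconnected ⟨u, hu⟩ ⟨u', hu'⟩)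
  | cons h q ih =>
    rename_i a b c
    intro hsupp u u' hu hu' hus hu's
    obtain ⟨m, hma, hmb⟩ := hX2 _ _ h
    have hA : {t : ι | a ∈ X t} ⊆ S := hsupp a (Walk.start_mem_support _)
    have hsupp' : ∀ z ∈ q.support, {t : ι | z ∈ X t} ⊆ S := by
      intro z hz
      exact hsupp z (by rw [Walk.support_cons]; exact List.mem_cons_of_mem _ hz)
    have r1 : (T.induce S).Reachable ⟨u, hus⟩ ⟨m, hA hma⟩ :=
      reachable_induce_mono T hA hu hma ((hX3 a).preconnected ⟨u, hu⟩ ⟨m, hma⟩)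
    exact r1.trans (ih hsupp' m u' hmb hu' (hA hma) hu's)

lemma isTreeDecomp_pow {d : ℕ} {ι : Type} {T : SimpleGraph ι} {X : ι → Finset V}
    (hX : IsTreeDecomp G T X) :
    IsTreeDecomp (graphPow G d) T (bigBag G d X) := by
  obtain ⟨ht, h1, h2, h3⟩ := hX
  refine ⟨ht, ?_, ?_, ?_⟩
  · intro v; obtain ⟨u, hu⟩ := h1 v; exact ⟨u, subset_bigBag X u hu⟩
  · rintro x y ⟨hne, p, hp⟩
    obtain ⟨u, hu⟩ := h1 x
    exact ⟨u, subset_bigBag X u hu, mem_bigBag.2 ⟨x, hu, p.1, hp⟩⟩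
  · intro v
    obtain ⟨u0, hu0⟩ := h1 v
    haveI : Nonempty {u : ι | v ∈ bigBag G d X u} := ⟨⟨u0, subset_bigBag X u0 hu0⟩⟩
    constructor
    rintro ⟨a, ha⟩ ⟨b, hb⟩
    obtain ⟨w, hw, q, hq⟩ := mem_bigBag.1 ha
    obtain ⟨w', hw', q', hq'⟩ := mem_bigBag.1 hb
    have hsupp : ∀ z ∈ (q.append q'.reverse).support,
        {t : ι | z ∈ X t} ⊆ {t : ι | v ∈ bigBag G d X t} := by
      intro z hz t hzt
      rw [Walk.mem_support_append_iff] at hz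
      rcases hz with hz | hz
      · exact mem_bigBag.2 ⟨z, hzt, q.dropUntil z hz,
          le_trans (Walk.length_dropUntil_le q hz) hq⟩
      · rw [Walk.support_reverse, List.mem_reverse] at hz
        exact mem_bigBag.2 ⟨z, hzt, q'.dropUntil z hz,
          le_trans (Walk.length_dropUntil_le q' hz) hq'⟩
    exact reach_chain h2 h3 (q.append q'.reverse) hsupp a b hw hw' ha hb

lemma mem_bag_between {r : ℕ} {X : Fin r → Finset V}
    (hX3 : ∀ i j l : Fin r, i < j → j < l → ∀ x, x ∈ X i → x ∈ X l → x ∈ X j)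
    {i j l : Fin r} (hij : i ≤ j) (hjl : j ≤ l) {x : V} (hxi : x ∈ X i) (hxl : x ∈ X l) :
    x ∈ X j := by
  rcases eq_or_lt_of_le hij with rfl | hij'
  · exact hxi
  rcases eq_or_lt_of_le hjl with rfl | hjl'
  · exact hxl
  exact hX3 i j l hij' hjl' x hxi hxl

lemma exists_mid_bag {r : ℕ} {X : Fin r → Finset V}
    (hX2 : ∀ a b : V, G.Adj a b → ∃ i, a ∈ X i ∧ b ∈ X i)
    (hX3 : ∀ i j l : Fin r, i < j → j < l → ∀ x, x ∈ X i → x ∈ X l → x ∈ X j) :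
    ∀ {w w' : V} (p : G.Walk w w') (i j l : Fin r), i ≤ j → j ≤ l →
      w ∈ X i → w' ∈ X l → ∃ z ∈ p.support, z ∈ X j := by
  intro w w' p
  induction p with
  | nil =>
    rename_i a
    intro i j l hij hjl hw hw'
    exact ⟨a, Walk.start_mem_support _, mem_bag_between hX3 hij hjl hw hw'⟩
  | cons h q ih =>
    rename_i a b c
    intro i j l hij hjl hw hw'
    obtain ⟨m, hma, hmb⟩ := hX2 _ _ h
    by_cases hjm : j ≤ m
    · exact ⟨a, Walk.start_mem_support _, mem_bag_between hX3 hij hjm hw hma⟩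
    · push_neg at hjm
      obtain ⟨z, hz, hzj⟩ := ih m j l hjm.le hjl hmb hw'
      exact ⟨z, by rw [Walk.support_cons]; exact List.mem_cons_of_mem _ hz, hzj⟩

lemma isPathDecomp_pow {d : ℕ} {r : ℕ} {X : Fin r → Finset V}
    (hX : IsPathDecomp G X) :
    IsPathDecomp (graphPow G d) (bigBag G d X) := by
  obtain ⟨h1, h2, h3⟩ := hX
  refine ⟨?_, ?_, ?_⟩
  · intro v; obtain ⟨u, hu⟩ := h1 v; exact ⟨u, subset_bigBag X u hu⟩
  · rintro x y ⟨hne, p, hp⟩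
    obtain ⟨u, hu⟩ := h1 x
    exact ⟨u, subset_bigBag X u hu, mem_bigBag.2 ⟨x, hu, p.1, hp⟩⟩
  · intro i j l hij hjl x hxi hxl
    obtain ⟨w, hw, q, hq⟩ := mem_bigBag.1 hxi
    obtain ⟨w', hw', q', hq'⟩ := mem_bigBag.1 hxl
    obtain ⟨z, hz, hzj⟩ := exists_mid_bag h2 h3 (q.append q'.reverse) i j l hij.le hjl.le hw hw'
    rw [Walk.mem_support_append_iff] at hz
    rcases hz with hz | hz
    · exact mem_bigBag.2 ⟨z, hzj, q.dropUntil z hz,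
        le_trans (Walk.length_dropUntil_le q hz) hq⟩
    · rw [Walk.support_reverse, List.mem_reverse] at hz
      exact mem_bigBag.2 ⟨z, hzj, q'.dropUntil z hz,
        le_trans (Walk.length_dropUntil_le q' hz) hq'⟩


lemma adj_pow {d : ℕ} (hd : 1 ≤ d) {x y : V} (h : G.Adj x y) : (graphPow G d).Adj x y :=
  ⟨h.ne, SimpleGraph.Path.singleton h, by simpa [SimpleGraph.Path.singleton] using hd⟩

lemma tw_nonempty (G : SimpleGraph V) :
    {k | ∃ (ι : Type) (T : SimpleGraph ι) (X : ι → Finset V),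
      IsTreeDecomp G T X ∧ sSup (Set.range fun u => (X u).card) - 1 = k}.Nonempty := by
  refine ⟨_, Unit, ⊥, fun _ => Finset.univ, ⟨⟨⟨fun a b => ?_⟩, isAcyclic_bot⟩,
    fun v => ⟨(), Finset.mem_univ v⟩,
    fun v w _ => ⟨(), Finset.mem_univ v, Finset.mem_univ w⟩, fun v => ?_⟩, rfl⟩
  · obtain rfl := Subsingleton.elim a b
    exact Reachable.refl a
  · haveI : Nonempty {u : Unit | v ∈ (Finset.univ : Finset V)} := ⟨⟨(), Finset.mem_univ v⟩⟩
    refine ⟨fun a b => ?_⟩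
    obtain rfl := Subsingleton.elim a b
    exact Reachable.refl a

lemma pw_nonempty (G : SimpleGraph V) :
    {k | ∃ (r : ℕ) (X : Fin r → Finset V),
      IsPathDecomp G X ∧ sSup (Set.range fun i => (X i).card) - 1 = k}.Nonempty := by
  refine ⟨_, 1, fun _ => Finset.univ, ⟨fun v => ⟨0, Finset.mem_univ v⟩,
    fun v w _ => ⟨0, Finset.mem_univ v, Finset.mem_univ w⟩, ?_⟩, rfl⟩
  intro i j l hij hjl x _ _
  exact absurd (Fin.lt_def.1 (hij.trans hjl)) (by have := l.isLt; omega)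

lemma range_card_bddAbove {ι : Type} (X : ι → Finset V) :
    BddAbove (Set.range fun u => (X u).card) := by
  refine ⟨Fintype.card V, ?_⟩
  rintro _ ⟨t, rfl⟩
  exact (Finset.card_le_card (Finset.subset_univ _)).trans (le_of_eq Finset.card_univ)

end TWAux

/-- For `d ≥ 1` and a finite simple graph `G`:
`tw(G) ≤ tw(G^d) ≤ (tw(G) + 1)·(1 + Δ(G)·Σ_{i=0}^{d−1}(Δ(G) − 1)^i) − 1` and
`pw(G) ≤ pw(G^d) ≤ (pw(G) + 1)·(1 + Δ(G)·Σ_{i=0}^{d−1}(Δ(G) − 1)^i) − 1`. -/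
theorem treewidth_pathwidth_graphPow
    {V : Type} [Fintype V] (G : SimpleGraph V) [DecidableRel G.Adj]
    (d : ℕ) (hd : 1 ≤ d) :
    (treewidth G ≤ treewidth (graphPow G d) ∧
      treewidth (graphPow G d) ≤
        (treewidth G + 1) *
          (1 + G.maxDegree * ∑ i ∈ Finset.range d, (G.maxDegree - 1) ^ i) - 1) ∧
    (pathwidth G ≤ pathwidth (graphPow G d) ∧
      pathwidth (graphPow G d) ≤
        (pathwidth G + 1) *
          (1 + G.maxDegree * ∑ i ∈ Finset.range d, (G.maxDegree - 1) ^ i) - 1) := by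
  classical
  have hB : ∀ (u : Unit), True := fun _ => trivial
  constructor
  · constructor
    · -- tw G ≤ tw (G^d)
      obtain ⟨ι, T, X, hdec, hk⟩ := Nat.sInf_mem (TWAux.tw_nonempty (graphPow G d))
      exact Nat.sInf_le ⟨ι, T, X, ⟨hdec.1, hdec.2.1,
        fun v w hvw => hdec.2.2.1 v w (TWAux.adj_pow hd hvw), hdec.2.2.2⟩, hk⟩
    · obtain ⟨ι, T, X, hdec, hk⟩ := Nat.sInf_mem (TWAux.tw_nonempty G)
      have h1 : treewidth (graphPow G d) ≤
          sSup (Set.range fun u => (TWAux.bigBag G d X u).card) - 1 :=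
        Nat.sInf_le ⟨ι, T, _, TWAux.isTreeDecomp_pow hdec, rfl⟩
      refine h1.trans (Nat.sub_le_sub_right (csSup_le' ?_) 1)
      rintro _ ⟨u, rfl⟩
      have hXu : (X u).card ≤ treewidth G + 1 := by
        have hb : (X u).card ≤ sSup (Set.range fun t => (X t).card) :=
          le_csSup (TWAux.range_card_bddAbove X) ⟨u, rfl⟩
        exact hb.trans (Nat.sub_le_iff_le_add.1 (le_of_eq hk))
      calc (TWAux.bigBag G d X u).card
          ≤ (X u).card * (1 + G.maxDegree * ∑ i ∈ Finset.range d, (G.maxDegree - 1) ^ i) :=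
            TWAux.bigBag_card_le X u
        _ ≤ (treewidth G + 1) * (1 + G.maxDegree * ∑ i ∈ Finset.range d, (G.maxDegree - 1) ^ i) :=
            Nat.mul_le_mul_right _ hXu
  · constructor
    · obtain ⟨r, X, hdec, hk⟩ := Nat.sInf_mem (TWAux.pw_nonempty (graphPow G d))
      exact Nat.sInf_le ⟨r, X, ⟨hdec.1,
        fun v w hvw => hdec.2.1 v w (TWAux.adj_pow hd hvw), hdec.2.2⟩, hk⟩
    · obtain ⟨r, X, hdec, hk⟩ := Nat.sInf_mem (TWAux.pw_nonempty G)
      have h1 : pathwidth (graphPow G d) ≤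
          sSup (Set.range fun i => (TWAux.bigBag G d X i).card) - 1 :=
        Nat.sInf_le ⟨r, _, TWAux.isPathDecomp_pow hdec, rfl⟩
      refine h1.trans (Nat.sub_le_sub_right (csSup_le' ?_) 1)
      rintro _ ⟨u, rfl⟩
      have hXu : (X u).card ≤ pathwidth G + 1 := by
        have hb : (X u).card ≤ sSup (Set.range fun t => (X t).card) :=
          le_csSup (TWAux.range_card_bddAbove X) ⟨u, rfl⟩
        exact hb.trans (Nat.sub_le_iff_le_add.1 (le_of_eq hk))
      calc (TWAux.bigBag G d X u).card
          ≤ (X u).card * (1 + G.maxDegree * ∑ i ∈ Finset.range d, (G.maxDegree - 1) ^ i) :=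
            TWAux.bigBag_card_le X u
        _ ≤ (pathwidth G + 1) * (1 + G.maxDegree * ∑ i ∈ Finset.range d, (G.maxDegree - 1) ^ i) :=
            Nat.mul_le_mul_right _ hXu
end
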